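/- For all integers n ≥ 1 and r ≥ 0, D^{n−1}(a·x^{r}·y) = a·x^{r}·y^{n}·w^{n−1} · ∑_{k=0}^{n−1} Q_{n,k}(r + x·w^{−1} − 1) · y^{k}, as an identity in the field K, where Q_{n,k}(r + x·w^{−1} − 1) denotes the evaluation of the polynomial Q_{n,k} at the element r + x·w^{−1} − 1 ∈ K. -/

import Mathlib

open Polynomial
set_option maxHeartbeats 1000000

/-- The Ramanujan–Shor polynomials `Q n k ∈ ℚ[x]`. -/
noncomputable def ramanujanShorQ : ℕ → ℤ → Polynomial ℚ
  | 0, _ => 0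
  | 1, k => if k = 0 then 1 else 0
  | (n + 2), k =>
      if 0 ≤ k ∧ k ≤ (n : ℤ) + 1 then
        (Polynomial.X + Polynomial.C ((n : ℚ) + 1)) * ramanujanShorQ (n + 1) k
          + Polynomial.C (((n : ℤ) + k : ℤ) : ℚ) * ramanujanShorQ (n + 1) (k - 1)
      else 0

/-- The images of the four variables `a, x, y, w` in the fraction field of `ℚ[a,x,y,w]`. -/
noncomputable def gv (i : Fin 4) : FractionRing (MvPolynomial (Fin 4) ℚ) :=
  algebraMap (MvPolynomial (Fin 4) ℚ) (FractionRing (MvPolynomial (Fin 4) ℚ)) (MvPolynomial.X i)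

lemma rsq_one (k : ℤ) : ramanujanShorQ 1 k = if k = 0 then 1 else 0 := rfl

lemma rsq_ss (n : ℕ) (k : ℤ) : ramanujanShorQ (n+2) k =
      if 0 ≤ k ∧ k ≤ (n : ℤ) + 1 then
        (Polynomial.X + Polynomial.C ((n : ℚ) + 1)) * ramanujanShorQ (n + 1) k
          + Polynomial.C (((n : ℤ) + k : ℤ) : ℚ) * ramanujanShorQ (n + 1) (k - 1)
      else 0 := rfl

lemma rsq_neg : ∀ (n : ℕ) (k : ℤ), k < 0 → ramanujanShorQ n k = 0
  | 0, _, _ => rfl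
  | 1, k, hk => by rw [rsq_one, if_neg (by omega)]
  | (n+2), k, hk => by rw [rsq_ss, if_neg (by omega)]

lemma rsq_big : ∀ (n : ℕ) (k : ℤ), (n : ℤ) ≤ k → ramanujanShorQ n k = 0
  | 0, _, _ => rfl
  | 1, k, hk => by rw [rsq_one, if_neg (by omega)]
  | (n+2), k, hk => by rw [rsq_ss, if_neg (by push_cast at hk ⊢; omega)]

theorem dn_axry (D : Derivation ℚ (FractionRing (MvPolynomial (Fin 4) ℚ))
      (FractionRing (MvPolynomial (Fin 4) ℚ)))
    (hDa : D (gv 0) = gv 0 * gv 1 * gv 2)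
    (hDx : D (gv 1) = gv 1 * gv 2 * gv 3)
    (hDy : D (gv 2) = (gv 2) ^ 3 * gv 3)
    (hDw : D (gv 3) = gv 2 * (gv 3) ^ 2)
    (n r : ℕ) (hn : 1 ≤ n) :
    (⇑D)^[n - 1] (gv 0 * (gv 1) ^ r * gv 2)
      = gv 0 * (gv 1) ^ r * (gv 2) ^ n * (gv 3) ^ (n - 1)
        * ∑ k ∈ Finset.range n,
            Polynomial.aeval ((r : _) + gv 1 * (gv 3)⁻¹ - 1) (ramanujanShorQ n (k : ℤ))
              * (gv 2) ^ k := by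
  have hw : gv 3 ≠ 0 := by
    intro h
    exact MvPolynomial.X_ne_zero (3 : Fin 4)
      (IsFractionRing.injective (MvPolynomial (Fin 4) ℚ) (FractionRing (MvPolynomial (Fin 4) ℚ))
        (h.trans (map_zero _).symm))
  set K := FractionRing (MvPolynomial (Fin 4) ℚ)
  set t : K := (r : K) + gv 1 * (gv 3)⁻¹ - 1 with ht
  have hDr : D ((r : ℕ) : K) = 0 := by
    rw [show ((r : ℕ) : K) = algebraMap ℚ K ((r : ℚ)) from (map_natCast _ r).symm,
      Derivation.map_algebraMap]
  have hDt : D t = 0 := by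
    rw [ht, map_sub, map_add, hDr, Derivation.leibniz, Derivation.leibniz_inv, hDx, hDw]
    simp only [smul_eq_mul, Derivation.map_one_eq_zero]
    field_simp
    ring
  have hpow : ∀ (u c : K), D u = u * c → ∀ j : ℕ, D (u ^ j) = j * u ^ j * c := by
    intro u c h j
    induction j with
    | zero => simp
    | succ j ih =>
      rw [pow_succ, Derivation.leibniz, smul_eq_mul, smul_eq_mul, ih, h]
      push_cast; ring
  have hDev : ∀ p : Polynomial ℚ, D ((Polynomial.aeval t) p) = 0 := by
    intro p
    induction p using Polynomial.induction_on' with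
    | add p q hp hq => rw [map_add, map_add, hp, hq, add_zero]
    | monomial j q =>
      rw [Polynomial.aeval_monomial, Derivation.leibniz, Derivation.leibniz_pow, hDt,
        Derivation.map_algebraMap]
      simp
  obtain ⟨m, rfl⟩ : ∃ m, n = m + 1 := ⟨n - 1, by omega⟩
  simp only [Nat.add_sub_cancel]
  induction m with
  | zero =>
    simp [rsq_one, Finset.sum_range_one]
  | succ m ih =>
    -- notation
    have hterm : ∀ k : ℕ,
        D ((Polynomial.aeval t) (ramanujanShorQ (m+1) (k : ℤ))
            * (gv 0 * gv 1 ^ r * gv 2 ^ (m + 1) * gv 3 ^ m * gv 2 ^ k))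
          = gv 0 * gv 1 ^ r * gv 2 ^ (m + 2) * gv 3 ^ (m + 1) *
            ((t + (m : K) + 1) * ((Polynomial.aeval t) (ramanujanShorQ (m+1) (k : ℤ)) * gv 2 ^ k)
              + ((m : K) + 1 + (k : K)) *
                  ((Polynomial.aeval t) (ramanujanShorQ (m+1) (k : ℤ)) * gv 2 ^ (k + 1))) := by
      intro k
      rw [Derivation.leibniz, Derivation.leibniz, Derivation.leibniz, Derivation.leibniz,
        Derivation.leibniz, hDev, hDa,
        hpow (gv 1) (gv 2 * gv 3) (by rw [hDx]; ring) r,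
        hpow (gv 2) (gv 2 ^ 2 * gv 3) (by rw [hDy]; ring) (m + 1),
        hpow (gv 2) (gv 2 ^ 2 * gv 3) (by rw [hDy]; ring) k,
        hpow (gv 3) (gv 2 * gv 3) (by rw [hDw]; ring) m]
      simp only [smul_eq_mul, ht]
      field_simp
      push_cast
      ring
    have hsum : ∑ k ∈ Finset.range (m + 2),
          (Polynomial.aeval t) (ramanujanShorQ (m + 2) (k : ℤ)) * gv 2 ^ k
        = ∑ k ∈ Finset.range (m + 1),
            ((t + (m : K) + 1) * ((Polynomial.aeval t) (ramanujanShorQ (m+1) (k : ℤ)) * gv 2 ^ k)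
              + ((m : K) + 1 + (k : K)) *
                  ((Polynomial.aeval t) (ramanujanShorQ (m+1) (k : ℤ)) * gv 2 ^ (k + 1))) := by
      have hck : ∀ k ∈ Finset.range (m + 2),
          (Polynomial.aeval t) (ramanujanShorQ (m + 2) (k : ℤ)) * gv 2 ^ k
            = (t + (m : K) + 1) * ((Polynomial.aeval t) (ramanujanShorQ (m+1) (k : ℤ)) * gv 2 ^ k)
              + ((m : K) + (k : K)) *
                  ((Polynomial.aeval t) (ramanujanShorQ (m+1) ((k : ℤ) - 1)) * gv 2 ^ k) := by
        intro k hk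
        simp only [Finset.mem_range] at hk
        rw [rsq_ss, if_pos (by constructor <;> omega)]
        simp only [map_add, map_mul, aeval_X, aeval_C, map_intCast]
        push_cast
        ring
      rw [Finset.sum_congr rfl hck, Finset.sum_add_distrib]
      have h1 : ∑ k ∈ Finset.range (m + 2),
            (t + (m : K) + 1) * ((Polynomial.aeval t) (ramanujanShorQ (m+1) (k : ℤ)) * gv 2 ^ k)
          = ∑ k ∈ Finset.range (m + 1),
            (t + (m : K) + 1) * ((Polynomial.aeval t) (ramanujanShorQ (m+1) (k : ℤ)) * gv 2 ^ k) := by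
        rw [Finset.sum_range_succ, rsq_big (m+1) ((m+1 : ℕ) : ℤ) (by push_cast; omega)]
        simp
      have h2 : ∑ k ∈ Finset.range (m + 2),
            ((m : K) + (k : K)) *
              ((Polynomial.aeval t) (ramanujanShorQ (m+1) ((k : ℤ) - 1)) * gv 2 ^ k)
          = ∑ k ∈ Finset.range (m + 1),
            ((m : K) + 1 + (k : K)) *
              ((Polynomial.aeval t) (ramanujanShorQ (m+1) (k : ℤ)) * gv 2 ^ (k + 1)) := by
        rw [Finset.sum_range_succ']
        rw [rsq_neg (m+1) (((0:ℕ) : ℤ) - 1) (by omega)]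
        simp only [map_zero, zero_mul, mul_zero, add_zero, pow_zero]
        apply Finset.sum_congr rfl
        intro k _
        have : ((k + 1 : ℕ) : ℤ) - 1 = (k : ℤ) := by push_cast; ring
        rw [this]
        push_cast
        ring
      rw [h1, h2, ← Finset.sum_add_distrib]
    rw [Function.iterate_succ_apply', ih (by omega),
      show gv 0 * gv 1 ^ r * gv 2 ^ (m + 1) * gv 3 ^ m *
            ∑ k ∈ Finset.range (m + 1),
              (Polynomial.aeval t) (ramanujanShorQ (m+1) (k : ℤ)) * gv 2 ^ k
          = ∑ k ∈ Finset.range (m + 1),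
              (Polynomial.aeval t) (ramanujanShorQ (m+1) (k : ℤ))
                * (gv 0 * gv 1 ^ r * gv 2 ^ (m + 1) * gv 3 ^ m * gv 2 ^ k) from by
        rw [Finset.mul_sum]; exact Finset.sum_congr rfl fun k _ => by ring,
      map_sum, Finset.sum_congr rfl fun k _ => hterm k, ← Finset.mul_sum, ← hsum]
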